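/- The pre-image triangle T and the triangle T'' of osculating-circle centers are perspective at the orthocenter of T: there exists a point H ∈ ℝ² such that ⟨H − P_i, P_j − P_k⟩ = 0 for every permutation {i,j,k} = {1,2,3} (H is the orthocenter of T), and for each i = 1,2,3 the points H, P_i, P_i'' are collinear, i.e. (P_i'' − P_i) × (H − P_i) = 0 (where (v₁,v₂) × (w₁,w₂) = v₁w₂ − v₂w₁). -/

import Mathlib

open Real

noncomputable def ellipsePt (a b t : ℝ) : ℝ × ℝ := (a * cos t, b * sin t)

noncomputable def oscCenter (a b t : ℝ) : ℝ × ℝ :=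
  ((a ^ 2 - b ^ 2) * (cos t) ^ 3 / a, -((a ^ 2 - b ^ 2) * (sin t) ^ 3 / b))

/-- Euclidean inner product on ℝ². -/
def dot (v w : ℝ × ℝ) : ℝ := v.1 * w.1 + v.2 * w.2

/-- Planar cross product. -/
def cross (v w : ℝ × ℝ) : ℝ := v.1 * w.2 - v.2 * w.1

set_option maxHeartbeats 2000000 in
/-- the pre-image triangle `T` and the triangle `T''` of osculating-circle
centers are perspective at the orthocenter `H` of `T`: `H` lies on each altitude of `T`,
and `H`, `P_i`, `P_i''` are collinear for `i = 1,2,3`. -/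
theorem stmt18 (a b u : ℝ) (hb : 0 < b) (hab : b < a)
    (P₁ P₂ P₃ P₁'' P₂'' P₃'' : ℝ × ℝ)
    (hP₁ : P₁ = ellipsePt a b (-u / 3))
    (hP₂ : P₂ = ellipsePt a b (-u / 3 - 2 * π / 3))
    (hP₃ : P₃ = ellipsePt a b (-u / 3 - 4 * π / 3))
    (hP₁'' : P₁'' = oscCenter a b (-u / 3))
    (hP₂'' : P₂'' = oscCenter a b (-u / 3 - 2 * π / 3))
    (hP₃'' : P₃'' = oscCenter a b (-u / 3 - 4 * π / 3)) :
    ∃ H : ℝ × ℝ,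
      (dot (H - P₁) (P₂ - P₃) = 0 ∧
       dot (H - P₂) (P₃ - P₁) = 0 ∧
       dot (H - P₃) (P₁ - P₂) = 0) ∧
      (cross (P₁'' - P₁) (H - P₁) = 0 ∧
       cross (P₂'' - P₂) (H - P₂) = 0 ∧
       cross (P₃'' - P₃) (H - P₃) = 0) := by
  have ha : (0:ℝ) < a := hb.trans hab
  have ha' : a ≠ 0 := ha.ne'
  have hb' : b ≠ 0 := hb.ne'
  subst hP₁ hP₂ hP₃ hP₁'' hP₂'' hP₃''
  refine ⟨((b^2-a^2)*Real.cos u/(2*a), (a^2-b^2)*Real.sin u/(2*b)), ?_⟩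
  set s : ℝ := -u/3 with hs
  have h1 : u = -(3*s) := by rw [hs]; ring
  have hu : Real.cos u = 4 * Real.cos s ^ 3 - 3 * Real.cos s := by
    rw [h1, Real.cos_neg, Real.cos_three_mul]
  have hu' : Real.sin u = -(3*Real.sin s - 4*Real.sin s ^ 3) := by
    rw [h1, Real.sin_neg, Real.sin_three_mul]
  have hpa : cos (π + π/3) = -(1/2) := by
    rw [Real.cos_add, Real.cos_pi, Real.sin_pi, Real.cos_pi_div_three]; ring
  have hpa' : sin (π + π/3) = -(Real.sqrt 3/2) := by
    rw [Real.sin_add, Real.cos_pi, Real.sin_pi, Real.sin_pi_div_three]; ring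
  have e2c : Real.cos (s - 2*π/3) = -Real.cos s/2 + Real.sqrt 3/2 * Real.sin s := by
    have h : s - 2*π/3 = s - (π - π/3) := by ring
    rw [h, Real.cos_sub, Real.cos_pi_sub, Real.sin_pi_sub, Real.cos_pi_div_three,
      Real.sin_pi_div_three]; ring
  have e2s : Real.sin (s - 2*π/3) = -Real.sin s/2 - Real.sqrt 3/2 * Real.cos s := by
    have h : s - 2*π/3 = s - (π - π/3) := by ring
    rw [h, Real.sin_sub, Real.cos_pi_sub, Real.sin_pi_sub, Real.cos_pi_div_three,
      Real.sin_pi_div_three]; ring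
  have e4c : Real.cos (s - 4*π/3) = -Real.cos s/2 - Real.sqrt 3/2 * Real.sin s := by
    have h : s - 4*π/3 = s - (π + π/3) := by ring
    rw [h, Real.cos_sub, hpa, hpa']; ring
  have e4s : Real.sin (s - 4*π/3) = -Real.sin s/2 + Real.sqrt 3/2 * Real.cos s := by
    have h : s - 4*π/3 = s - (π + π/3) := by ring
    rw [h, Real.sin_sub, hpa, hpa']; ring
  have hp : Real.sin s ^ 2 + Real.cos s ^ 2 = 1 := Real.sin_sq_add_cos_sq s
  have hr : Real.sqrt 3 ^ 2 = 3 := Real.sq_sqrt (by norm_num)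
  simp only [ellipsePt, oscCenter, dot, cross, Prod.fst_sub, Prod.snd_sub]
  rw [hu, hu', e2c, e2s, e4c, e4s]
  set C := Real.cos s
  set S := Real.sin s
  set r := Real.sqrt 3
  refine ⟨⟨?_, ?_, ?_⟩, ?_, ?_, ?_⟩
  · field_simp
    linear_combination ((8:ℝ)*b^2*C*S*r + (-8:ℝ)*a^2*C*S*r) * hp + 0 * hr
  · field_simp
    linear_combination ((-12:ℝ)*b^2*C^2 + (-4:ℝ)*b^2*C*S*r + (12:ℝ)*a^2*C^2 + (4:ℝ)*a^2*C*S*r + (12:ℝ)*b^2*S^2 + (-12:ℝ)*a^2*S^2) * hp + ((1:ℝ)*a^2*S^2 + (1:ℝ)*b^2*C^2) * hr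
  · field_simp
    linear_combination ((12:ℝ)*b^2*C^2 + (-4:ℝ)*b^2*C*S*r + (-12:ℝ)*a^2*C^2 + (4:ℝ)*a^2*C*S*r + (-12:ℝ)*b^2*S^2 + (12:ℝ)*a^2*S^2) * hp + ((-1:ℝ)*a^2*S^2 + (-1:ℝ)*b^2*C^2) * hr
  · field_simp
    linear_combination ((-3:ℝ)*a^4*C*S + (3:ℝ)*b^4*C*S) * hp + 0 * hr
  · field_simp
    linear_combination ((12:ℝ)*a^4*C*S + (12:ℝ)*a^2*b^2*C^2*r + (12:ℝ)*a^2*b^2*S^2*r + (-12:ℝ)*b^4*C*S + (-12:ℝ)*b^4*C^2*r + (-72:ℝ)*a^2*b^2*C^3*S + (36:ℝ)*a^4*C^3*S + (36:ℝ)*b^4*C^3*S + (-24:ℝ)*a^2*b^2*C^4*r + (12:ℝ)*a^4*C^4*r + (12:ℝ)*b^4*C^4*r + (72:ℝ)*a^2*b^2*C*S^3 + (-36:ℝ)*a^4*C*S^3 + (-36:ℝ)*b^4*C*S^3 + (-24:ℝ)*a^2*b^2*S^4*r + (12:ℝ)*a^4*S^4*r + (-12:ℝ)*a^4*S^2*r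 + (12:ℝ)*b^4*S^4*r) * hp + ((21:ℝ)*a^2*b^2*C^3*S + (12:ℝ)*a^4*C*S^3 + (-12:ℝ)*a^4*C*S^5 + (-21:ℝ)*a^2*b^2*C*S^3 + (24:ℝ)*a^2*b^2*C*S^5 + (-6:ℝ)*a^2*b^2*C^2*S^2*r + (-12:ℝ)*b^4*C^3*S + (9:ℝ)*b^4*C*S^3 + (-12:ℝ)*b^4*C*S^5 + (3:ℝ)*b^4*C^2*S^2*r + (-3:ℝ)*a^4*S^4*r + (4:ℝ)*a^4*S^6*r + (7:ℝ)*a^2*b^2*S^4*r + (-8:ℝ)*a^2*b^2*S^6*r + (1:ℝ)*a^2*b^2*C*S^3*r^2 + (-4:ℝ)*b^4*S^4*r + (4:ℝ)*b^4*S^6*r + (-1:ℝ)*b^4*C*S^3*r^2 + (-24:ℝ)*a^2*b^2*C^5*S + (12:ℝ)*a^4*C^5*S + (-9:ℝ)*a^4*C^3*S + (3:ℝ)*a^4*C^2*S^2*r + (12:ℝ)*b^4*C^5*S + (-8:ℝ)*a^2*b^2*C^6*r + (7:ℝ)*a^2*b^2*C^4*r + (4:ℝ)*a^4*C^6*r +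 (-4:ℝ)*a^4*C^4*r + (1:ℝ)*a^4*C^3*S*r^2 + (4:ℝ)*b^4*C^6*r + (-3:ℝ)*b^4*C^4*r + (-1:ℝ)*a^2*b^2*C^3*S*r^2) * hr
  · field_simp
    linear_combination ((12:ℝ)*a^4*C*S + (-12:ℝ)*a^2*b^2*C^2*r + (-12:ℝ)*a^2*b^2*S^2*r + (-12:ℝ)*b^4*C*S + (12:ℝ)*b^4*C^2*r + (-72:ℝ)*a^2*b^2*C^3*S + (36:ℝ)*a^4*C^3*S + (36:ℝ)*b^4*C^3*S + (24:ℝ)*a^2*b^2*C^4*r + (-12:ℝ)*a^4*C^4*r + (-12:ℝ)*b^4*C^4*r + (72:ℝ)*a^2*b^2*C*S^3 + (-36:ℝ)*a^4*C*S^3 + (-36:ℝ)*b^4*C*S^3 + (24:ℝ)*a^2*b^2*S^4*r + (-12:ℝ)*a^4*S^4*r + (12:ℝ)*a^4*S^2*r + (-12:ℝ)*b^4*S^4*r) * hp + ((21:ℝ)*a^2*b^2*C^3*S + (12:ℝ)*a^4*C*S^3 + (-12:ℝ)*a^4*C*S^5 + (-21:ℝ)*a^2*b^2*C*S^3 + (24:ℝ)*a^2*b^2*C*S^5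 + (6:ℝ)*a^2*b^2*C^2*S^2*r + (-12:ℝ)*b^4*C^3*S + (9:ℝ)*b^4*C*S^3 + (-12:ℝ)*b^4*C*S^5 + (-3:ℝ)*b^4*C^2*S^2*r + (3:ℝ)*a^4*S^4*r + (-4:ℝ)*a^4*S^6*r + (-7:ℝ)*a^2*b^2*S^4*r + (8:ℝ)*a^2*b^2*S^6*r + (1:ℝ)*a^2*b^2*C*S^3*r^2 + (4:ℝ)*b^4*S^4*r + (-4:ℝ)*b^4*S^6*r + (-1:ℝ)*b^4*C*S^3*r^2 + (-24:ℝ)*a^2*b^2*C^5*S + (12:ℝ)*a^4*C^5*S + (-9:ℝ)*a^4*C^3*S + (-3:ℝ)*a^4*C^2*S^2*r + (12:ℝ)*b^4*C^5*S + (8:ℝ)*a^2*b^2*C^6*r + (-7:ℝ)*a^2*b^2*C^4*r + (-4:ℝ)*a^4*C^6*r + (4:ℝ)*a^4*C^4*r + (1:ℝ)*a^4*C^3*S*r^2 + (-4:ℝ)*b^4*C^6*r + (3:ℝ)*b^4*C^4*r + (-1:ℝ)*a^2*b^2*C^3*S*r^2) * hr
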